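/- arXiv:2208.14813 — 2 statements merged into one kernel-verified Lean document; each statement's English description precedes it below -/
import Mathlib

section
/- Let φ : ℝ² × ℝ × ℝ → ℝ, written φ(r, z, t), be differentiable, let ζ : ℝ² × ℝ → ℝ be differentiable, let g ∈ ℝ, and write φ̂(r, t) := φ(r, ζ(r, t), t). Suppose that for all (r, t): (i) the Bernoulli equation holds on the free surface, (∂_t φ)(r, ζ(r,t), t) + ½ |(∇φ)(r, ζ(r,t), t)|² + g ζ(r,t) = 0; and (ii) the kinematic boundary condition holds, ∂_t ζ(r,t) = (∂_z φ)(r, ζ(r,t), t) − (∇_r φ)(r, ζ(r,t), t) · ∇_r ζ(r,t). Then for all (r, t): ∂_t φ̂ + ½ |(∇_r φ)^|² − ½ ((∂_z φ)^)² + (∂_z φ)^ ( (∇_r φ)^ · ∇_r ζ ) + g ζ = 0, where all hatted quantities are evaluated at (r, ζ(r,t), t). (Deterministic part of the stochastic classical water wave momentum equation, recovering Zakharov's surface equation.) -/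
/-!
Deterministic part of the stochastic classical water wave momentum equation
(recovering Zakharov's surface equation): if the Bernoulli equation holds on the
free surface, `(∂_t φ)^ + ½ |(∇φ)^|² + g ζ = 0`, and the kinematic boundary
condition holds, `∂_t ζ = (∂_z φ)^ − (∇_r φ)^ · ∇_r ζ`, then
`∂_t φ̂ + ½ |(∇_r φ)^|² − ½ ((∂_z φ)^)² + (∂_z φ)^ ((∇_r φ)^ · ∇_r ζ) + g ζ = 0`,
where `φ̂ (r, t) = φ (r, ζ (r, t), t)`.
-/

abbrev E2 : Type := EuclideanSpace ℝ (Fin 2)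

/-- Horizontal gradient `∇_r φ` of a time-dependent scalar field on `ℝ² × ℝ × ℝ`. -/
noncomputable def gradr (φ : E2 × ℝ × ℝ → ℝ) (r : E2) (z t : ℝ) : E2 :=
  gradient (fun r' : E2 => φ (r', z, t)) r

/-- Vertical partial derivative `∂_z φ` of a time-dependent scalar field. -/
noncomputable def dz (φ : E2 × ℝ × ℝ → ℝ) (r : E2) (z t : ℝ) : ℝ :=
  deriv (fun z' : ℝ => φ (r, z', t)) z

/-- Time partial derivative `∂_t φ` of a time-dependent scalar field. -/
noncomputable def dt (φ : E2 × ℝ × ℝ → ℝ) (r : E2) (z t : ℝ) : ℝ :=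
  deriv (fun t' : ℝ => φ (r, z, t')) t

theorem zakharov_surface_momentum_equation
    (φ : E2 × ℝ × ℝ → ℝ) (ζ : E2 × ℝ → ℝ) (g : ℝ)
    (hφ : Differentiable ℝ φ) (hζ : Differentiable ℝ ζ)
    (bernoulli : ∀ (r : E2) (t : ℝ),
      dt φ r (ζ (r, t)) t
        + (1 / 2) * (‖gradr φ r (ζ (r, t)) t‖ ^ 2 + (dz φ r (ζ (r, t)) t) ^ 2)
        + g * ζ (r, t) = 0)
    (kinematic : ∀ (r : E2) (t : ℝ),
      deriv (fun t' : ℝ => ζ (r, t')) t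
        = dz φ r (ζ (r, t)) t
          - (inner ℝ (gradr φ r (ζ (r, t)) t)
              (gradient (fun r' : E2 => ζ (r', t)) r) : ℝ)) :
    ∀ (r : E2) (t : ℝ),
      deriv (fun t' : ℝ => φ (r, ζ (r, t'), t')) t
        + (1 / 2) * ‖gradr φ r (ζ (r, t)) t‖ ^ 2
        - (1 / 2) * (dz φ r (ζ (r, t)) t) ^ 2
        + dz φ r (ζ (r, t)) t
            * (inner ℝ (gradr φ r (ζ (r, t)) t)
                (gradient (fun r' : E2 => ζ (r', t)) r) : ℝ)
        + g * ζ (r, t) = 0 := by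
  intro r t
  set z := ζ (r, t) with hz
  have hF := (hφ (r, z, t)).hasFDerivAt
  set F := fderiv ℝ φ (r, z, t) with hFdef
  -- partial derivatives as F applied to basis directions
  have hdz : dz φ r z t = F (0, 1, 0) := by
    have hc : HasDerivAt (fun z' : ℝ => ((r, z', t) : E2 × ℝ × ℝ))
        ((0, 1, 0) : E2 × ℝ × ℝ) z :=
      HasDerivAt.prodMk (hasDerivAt_const z r) (HasDerivAt.prodMk (hasDerivAt_id z) (hasDerivAt_const z t))
    exact (hF.comp_hasDerivAt z hc).deriv
  have hdt : dt φ r z t = F (0, 0, 1) := by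
    have hc : HasDerivAt (fun t' : ℝ => ((r, z, t') : E2 × ℝ × ℝ))
        ((0, 0, 1) : E2 × ℝ × ℝ) t :=
      HasDerivAt.prodMk (hasDerivAt_const t r) (HasDerivAt.prodMk (hasDerivAt_const t z) (hasDerivAt_id t))
    exact (hF.comp_hasDerivAt t hc).deriv
  -- derivative of the trace
  have hζt : HasDerivAt (fun t' : ℝ => ζ (r, t')) (deriv (fun t' : ℝ => ζ (r, t')) t) t := by
    exact (((hζ (r, t)).comp t
      ((DifferentiableAt.prodMk (differentiableAt_const r) differentiableAt_id))).hasDerivAt)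
  set zt := deriv (fun t' : ℝ => ζ (r, t')) t with hzt
  have hc : HasDerivAt (fun t' : ℝ => ((r, ζ (r, t'), t') : E2 × ℝ × ℝ))
      ((0, zt, 1) : E2 × ℝ × ℝ) t :=
    HasDerivAt.prodMk (hasDerivAt_const t r) (HasDerivAt.prodMk hζt (hasDerivAt_id t))
  have hmain : deriv (fun t' : ℝ => φ (r, ζ (r, t'), t')) t = F (0, zt, 1) :=
    (hF.comp_hasDerivAt t hc).deriv
  have hdecomp : F ((0, zt, 1) : E2 × ℝ × ℝ)
      = zt * F (0, 1, 0) + F (0, 0, 1) := by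
    have : ((0, zt, 1) : E2 × ℝ × ℝ) = zt • ((0, 1, 0) : E2 × ℝ × ℝ) + (0, 0, 1) := by
      simp [Prod.ext_iff]
    rw [this, map_add, map_smul]
    simp
  have hk := kinematic r t
  have hb := bernoulli r t
  rw [hmain, hdecomp, ← hdz, ← hdt, ← hzt] at *
  rw [hk]
  nlinarith [hb]
end

section
/- Let φ : ℝ² × ℝ × ℝ → ℝ, written φ(r, z, t), be differentiable, let ζ : ℝ² × ℝ → ℝ be differentiable, let g ∈ ℝ, write φ̂(r, t) := φ(r, ζ(r,t), t), and define G(r, t) := − ∇_r ζ(r,t) · (∇_r φ)(r, ζ(r,t), t) + (∂_z φ)(r, ζ(r,t), t). Suppose that for all (r, t): (i) (∂_t φ)(r, ζ(r,t), t) + ½ |(∇φ)(r, ζ(r,t), t)|² + g ζ(r,t) = 0; and (ii) ∂_t ζ(r,t) = (∂_z φ)(r, ζ(r,t), t) − (∇_r φ)(r, ζ(r,t), t) · ∇_r ζ(r,t). Then for all (r, t): ∂_t φ̂ + g ζ + ½ |∇_r φ̂|² − ( G + ∇_r ζ · ∇_r φ̂ )² / ( 2 (1 + |∇_r ζ|²)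 ) = 0. (Deterministic part of the stochastic Craig–Sulem form of the water wave equations, with G the Dirichlet-to-Neumann expression G(ζ)φ̂.) -/
lemma inner_gradient_eq (f : E2 → ℝ) (x u : E2) :
    (inner ℝ (gradient f x) u : ℝ) = fderiv ℝ f x u := by
  rw [← InnerProductSpace.toDual_apply_apply, gradient,
    LinearIsometryEquiv.apply_symm_apply]

lemma inner_gradr (φ : E2 × ℝ × ℝ → ℝ) (hφ : Differentiable ℝ φ) (r : E2) (z t : ℝ) (u : E2) :
    (inner ℝ (gradr φ r z t) u : ℝ) = fderiv ℝ φ (r, z, t) (u, 0, 0) := by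
  have hL : HasFDerivAt (fun r' : E2 => ((r', (z, t)) : E2 × ℝ × ℝ))
      ((ContinuousLinearMap.id ℝ E2).prod 0) r :=
    (hasFDerivAt_id r).prodMk (hasFDerivAt_const (z, t) r)
  have h : HasFDerivAt (fun r' : E2 => φ (r', z, t))
      ((fderiv ℝ φ (r, z, t)).comp ((ContinuousLinearMap.id ℝ E2).prod 0)) r :=
    ((hφ (r, z, t)).hasFDerivAt).comp r hL
  rw [gradr, inner_gradient_eq, h.fderiv]
  rfl

lemma dz_eq (φ : E2 × ℝ × ℝ → ℝ) (hφ : Differentiable ℝ φ) (r : E2) (z t : ℝ) :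
    dz φ r z t = fderiv ℝ φ (r, z, t) (0, 1, 0) := by
  have hL : HasDerivAt (fun z' : ℝ => ((r, (z', t)) : E2 × ℝ × ℝ)) ((0 : E2), (1 : ℝ), (0 : ℝ)) z :=
    (hasDerivAt_const z r).prodMk ((hasDerivAt_id z).prodMk (hasDerivAt_const z t))
  have h : HasDerivAt (fun z' : ℝ => φ (r, z', t)) (fderiv ℝ φ (r, z, t) (0, 1, 0)) z :=
    ((hφ (r, z, t)).hasFDerivAt).comp_hasDerivAt z hL
  exact h.deriv

lemma dt_eq (φ : E2 × ℝ × ℝ → ℝ) (hφ : Differentiable ℝ φ) (r : E2) (z t : ℝ) :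
    dt φ r z t = fderiv ℝ φ (r, z, t) (0, 0, 1) := by
  have hL : HasDerivAt (fun t' : ℝ => ((r, (z, t')) : E2 × ℝ × ℝ)) ((0 : E2), (0 : ℝ), (1 : ℝ)) t :=
    (hasDerivAt_const t r).prodMk ((hasDerivAt_const t z).prodMk (hasDerivAt_id t))
  have h : HasDerivAt (fun t' : ℝ => φ (r, z, t')) (fderiv ℝ φ (r, z, t) (0, 0, 1)) t :=
    ((hφ (r, z, t)).hasFDerivAt).comp_hasDerivAt t hL
  exact h.deriv

lemma time_chain (φ : E2 × ℝ × ℝ → ℝ) (ζ : E2 × ℝ → ℝ)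
    (hφ : Differentiable ℝ φ) (hζ : Differentiable ℝ ζ) (r : E2) (t : ℝ) :
    deriv (fun t' : ℝ => φ (r, ζ (r, t'), t')) t
      = (deriv (fun t' : ℝ => ζ (r, t')) t) * dz φ r (ζ (r, t)) t + dt φ r (ζ (r, t)) t := by
  set ζt := deriv (fun t' : ℝ => ζ (r, t')) t with hζtdef
  have hζd : DifferentiableAt ℝ (fun t' : ℝ => ζ (r, t')) t := by
    exact (hζ.comp ((differentiable_const r).prodMk differentiable_id)).differentiableAt
  have hζt : HasDerivAt (fun t' : ℝ => ζ (r, t')) ζt t := hζd.hasDerivAt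
  have hL : HasDerivAt (fun t' : ℝ => ((r, (ζ (r, t'), t')) : E2 × ℝ × ℝ))
      ((0 : E2), ζt, (1 : ℝ)) t :=
    (hasDerivAt_const t r).prodMk (hζt.prodMk (hasDerivAt_id t))
  have h : HasDerivAt (fun t' : ℝ => φ (r, ζ (r, t'), t'))
      (fderiv ℝ φ (r, ζ (r, t), t) ((0 : E2), ζt, (1 : ℝ))) t :=
    ((hφ (r, ζ (r, t), t)).hasFDerivAt).comp_hasDerivAt t hL
  rw [h.deriv, dz_eq φ hφ, dt_eq φ hφ]
  have : ((0 : E2), ζt, (1 : ℝ)) = ζt • ((0 : E2), (1 : ℝ), (0 : ℝ)) + ((0 : E2), (0 : ℝ), (1 : ℝ)) := by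
    simp [Prod.ext_iff]
  rw [this, map_add, map_smul]
  simp

lemma space_chain (φ : E2 × ℝ × ℝ → ℝ) (ζ : E2 × ℝ → ℝ)
    (hφ : Differentiable ℝ φ) (hζ : Differentiable ℝ ζ) (r : E2) (t : ℝ) :
    gradient (fun r' : E2 => φ (r', ζ (r', t), t)) r
      = gradr φ r (ζ (r, t)) t
        + (dz φ r (ζ (r, t)) t) • gradient (fun r' : E2 => ζ (r', t)) r := by
  set a := gradient (fun r' : E2 => ζ (r', t)) r with ha
  have hζd : DifferentiableAt ℝ (fun r' : E2 => ζ (r', t)) r :=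
    (hζ.comp (differentiable_id.prodMk (differentiable_const t))).differentiableAt
  set Z := fderiv ℝ (fun r' : E2 => ζ (r', t)) r with hZ
  have hL : HasFDerivAt (fun r' : E2 => ((r', (ζ (r', t), t)) : E2 × ℝ × ℝ))
      ((ContinuousLinearMap.id ℝ E2).prod (Z.prod 0)) r :=
    (hasFDerivAt_id r).prodMk (hζd.hasFDerivAt.prodMk (hasFDerivAt_const t r))
  have h : HasFDerivAt (fun r' : E2 => φ (r', ζ (r', t), t))
      ((fderiv ℝ φ (r, ζ (r, t), t)).comp ((ContinuousLinearMap.id ℝ E2).prod (Z.prod 0))) r :=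
    ((hφ (r, ζ (r, t), t)).hasFDerivAt).comp r hL
  apply ext_inner_right ℝ
  intro u
  rw [inner_gradient_eq, h.fderiv]
  have key : ((ContinuousLinearMap.id ℝ E2).prod (Z.prod 0)) u
      = ((u, 0, 0) : E2 × ℝ × ℝ) + (Z u) • ((0 : E2), (1 : ℝ), (0 : ℝ)) := by
    simp [Prod.ext_iff]
  rw [ContinuousLinearMap.comp_apply, key, map_add, map_smul]
  have hZu : Z u = (inner ℝ a u : ℝ) := (inner_gradient_eq _ r u).symm
  rw [inner_add_left, real_inner_smul_left, inner_gradr φ hφ, ← dz_eq φ hφ, hZu]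
  simp [smul_eq_mul]
  ring

theorem craig_sulem_surface_momentum_equation
    (φ : E2 × ℝ × ℝ → ℝ) (ζ : E2 × ℝ → ℝ) (g : ℝ)
    (hφ : Differentiable ℝ φ) (hζ : Differentiable ℝ ζ)
    (G : E2 → ℝ → ℝ)
    (hG : ∀ (r : E2) (t : ℝ),
      G r t = -(inner ℝ (gradient (fun r' : E2 => ζ (r', t)) r)
                  (gradr φ r (ζ (r, t)) t) : ℝ)
              + dz φ r (ζ (r, t)) t)
    (bernoulli : ∀ (r : E2) (t : ℝ),
      dt φ r (ζ (r, t)) t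
        + (1 / 2) * (‖gradr φ r (ζ (r, t)) t‖ ^ 2 + (dz φ r (ζ (r, t)) t) ^ 2)
        + g * ζ (r, t) = 0)
    (kinematic : ∀ (r : E2) (t : ℝ),
      deriv (fun t' : ℝ => ζ (r, t')) t
        = dz φ r (ζ (r, t)) t
          - (inner ℝ (gradr φ r (ζ (r, t)) t)
              (gradient (fun r' : E2 => ζ (r', t)) r) : ℝ)) :
    ∀ (r : E2) (t : ℝ),
      deriv (fun t' : ℝ => φ (r, ζ (r, t'), t')) t
        + g * ζ (r, t)
        + (1 / 2) * ‖gradient (fun r' : E2 => φ (r', ζ (r', t), t)) r‖ ^ 2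
        - (G r t
            + (inner ℝ (gradient (fun r' : E2 => ζ (r', t)) r)
                (gradient (fun r' : E2 => φ (r', ζ (r', t), t)) r) : ℝ)) ^ 2
          / (2 * (1 + ‖gradient (fun r' : E2 => ζ (r', t)) r‖ ^ 2)) = 0 := by
  intro r t
  set a := gradient (fun r' : E2 => ζ (r', t)) r with ha
  set v := gradr φ r (ζ (r, t)) t with hv
  set w := dz φ r (ζ (r, t)) t with hw
  set dtv := dt φ r (ζ (r, t)) t with hdtv
  have hsc : gradient (fun r' : E2 => φ (r', ζ (r', t), t)) r = v + w • a :=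
    space_chain φ ζ hφ hζ r t
  have htc : deriv (fun t' : ℝ => φ (r, ζ (r, t'), t')) t
      = (deriv (fun t' : ℝ => ζ (r, t')) t) * w + dtv := time_chain φ ζ hφ hζ r t
  have hkin := kinematic r t
  have hb := bernoulli r t
  rw [hsc, htc, hkin, hG r t]
  have hnorm : ‖v + w • a‖ ^ 2 = ‖v‖ ^ 2 + 2 * (w * (inner ℝ v a : ℝ)) + w ^ 2 * ‖a‖ ^ 2 := by
    rw [@norm_add_sq_real, real_inner_smul_right, norm_smul]
    simp [mul_pow, abs_sq]
    try ring
  have hinner : (inner ℝ a (v + w • a) : ℝ) = (inner ℝ a v : ℝ) + w * ‖a‖ ^ 2 := by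
    rw [inner_add_right, real_inner_smul_right, real_inner_self_eq_norm_sq]
  have hsymm : (inner ℝ a v : ℝ) = (inner ℝ v a : ℝ) := real_inner_comm v a
  rw [hnorm, hinner, hsymm]
  have hA : (1 : ℝ) + ‖a‖ ^ 2 ≠ 0 := by positivity
  field_simp
  ring_nf
  nlinarith [hb, sq_nonneg (‖a‖)]
end
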